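/- If P is a k-plex with |P| ≥ 2k - 1, then the induced subgraph G[P] is connected and has diameter at most 2. -/

import Mathlib

open Finset

variable {V : Type*} [Fintype V] [DecidableEq V]

/-- A set `P` of vertices is a `k`-plex in `G` if every `u ∈ P` has degree at least
`|P| - k` in the induced subgraph `G[P]`, i.e. `|P| ≤ d_P(u) + k`. -/
def SimpleGraph.IsKPlex (G : SimpleGraph V) [DecidableRel G.Adj] (k : ℕ) (P : Finset V) : Prop :=
  ∀ u ∈ P, P.card ≤ (P.filter (fun x => G.Adj u x)).card + k

lemma kplex_common_neighbor (G : SimpleGraph V) [DecidableRel G.Adj]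
    (k : ℕ) (P : Finset V) (hP : G.IsKPlex k P)
    (hcard : (2 * k - 1 : ℤ) ≤ (P.card : ℤ))
    {u v : V} (hu : u ∈ P) (hv : v ∈ P) (hne : u ≠ v) (hnadj : ¬ G.Adj u v) :
    ∃ w ∈ P, G.Adj u w ∧ G.Adj v w := by
  by_contra hcon
  push_neg at hcon
  set A := P.filter (fun x => G.Adj u x) with hA
  set B := P.filter (fun x => G.Adj v x) with hB
  have hdisj : Disjoint A B := by
    rw [Finset.disjoint_left]
    intro w hwA hwB
    simp only [hA, hB, Finset.mem_filter] at hwA hwB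
    exact hcon w hwA.1 hwA.2 hwB.2
  have hsub : A ∪ B ⊆ (P.erase u).erase v := by
    intro w hw
    rcases Finset.mem_union.mp hw with h1 | h1
    · simp only [hA, Finset.mem_filter] at h1
      refine Finset.mem_erase.mpr ⟨?_, Finset.mem_erase.mpr ⟨?_, h1.1⟩⟩
      · rintro rfl; exact hnadj h1.2
      · rintro rfl; exact G.irrefl h1.2
    · simp only [hB, Finset.mem_filter] at h1
      refine Finset.mem_erase.mpr ⟨?_, Finset.mem_erase.mpr ⟨?_, h1.1⟩⟩
      · rintro rfl; exact G.irrefl h1.2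
      · rintro rfl; exact hnadj (h1.2.symm)
  have hcard2 : ((P.erase u).erase v).card = P.card - 2 := by
    rw [Finset.card_erase_of_mem (Finset.mem_erase.mpr ⟨hne.symm, hv⟩),
      Finset.card_erase_of_mem hu]
    omega
  have h2 : A.card + B.card ≤ P.card - 2 := by
    rw [← Finset.card_union_of_disjoint hdisj, ← hcard2]
    exact Finset.card_le_card hsub
  have hAc : P.card ≤ A.card + k := hP u hu
  have hBc : P.card ≤ B.card + k := hP v hv
  have hP2 : 2 ≤ P.card := by
    refine Finset.one_lt_card.mpr ⟨u, hu, v, hv, hne⟩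
  have : (P.card : ℤ) - 2 ≥ 2 * (P.card : ℤ) - 2 * k := by
    have := h2
    have hA' : (P.card : ℤ) ≤ A.card + k := by exact_mod_cast hAc
    have hB' : (P.card : ℤ) ≤ B.card + k := by exact_mod_cast hBc
    have h2' : (A.card : ℤ) + B.card ≤ (P.card : ℤ) - 2 := by
      have := (Int.ofNat_le.mpr h2)
      push_cast at this ⊢
      omega
    linarith
  linarith

theorem kplex_connected_diameter_le_two (G : SimpleGraph V) [DecidableRel G.Adj]
    (k : ℕ) (hk : 1 ≤ k) (P : Finset V) (hP : G.IsKPlex k P)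
    (hcard : (2 * k - 1 : ℤ) ≤ (P.card : ℤ)) :
    (G.induce (P : Set V)).Connected ∧
      ∀ u v : (P : Set V), (G.induce (P : Set V)).dist u v ≤ 2 := by
  have key : ∀ u v : (P : Set V),
      ∃ p : (G.induce (P : Set V)).Walk u v, p.length ≤ 2 := by
    rintro ⟨u, hu⟩ ⟨v, hv⟩
    simp only [Finset.mem_coe] at hu hv
    by_cases hne : u = v
    · subst hne
      exact ⟨SimpleGraph.Walk.nil, by simp⟩
    · by_cases hadj : G.Adj u v
      · exact ⟨SimpleGraph.Walk.cons (by exact hadj) SimpleGraph.Walk.nil, by show 1 ≤ 2; omega⟩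
      · obtain ⟨w, hw, huw, hvw⟩ :=
          kplex_common_neighbor G k P hP hcard hu hv hne hadj
        refine ⟨SimpleGraph.Walk.cons (v := ⟨w, hw⟩) (by exact huw)
          (SimpleGraph.Walk.cons (by exact hvw.symm) SimpleGraph.Walk.nil), by show 2 ≤ 2; omega⟩
  have hPne : P.Nonempty := by
    rw [← Finset.card_pos]
    have hk' : (1 : ℤ) ≤ 2 * k - 1 := by omega
    omega
  obtain ⟨x, hx⟩ := hPne
  haveI : Nonempty (P : Set V) := ⟨⟨x, hx⟩⟩
  constructor
  · exact SimpleGraph.Connected.mk fun a b => ⟨(key a b).choose⟩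
  · intro u v
    obtain ⟨p, hp⟩ := key u v
    exact le_trans (SimpleGraph.dist_le p) hp
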